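/- arXiv:2308.04264 — 2 statements merged into one kernel-verified Lean document; each statement's English description precedes it below -/
import Mathlib

section
/- Let n be a positive integer, ε ∈ (0, 1/2), and let k be a positive integer with k ≥ 4n/ε². Let p₁, …, p_n ∈ (0,1] and let x₁, …, x_n be independent random variables with x_j distributed as NB(k, p_j). Set W = ∏_{j=1}^n (x_j / k) and μ = ∏_{j=1}^n (1/p_j). Then Pr[ |W − μ| ≥ ε·μ ] ≤ 1/3; in particular, with probability at least 2/3, W ∈ [(1−ε)μ, (1+ε)μ]. -/
open MeasureTheory ProbabilityTheory

/-- The negative binomial pmf `NB(k,p)` on ℕ: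
`C(m-1, k-1) pᵏ (1-p)^{m-k}` for `m ≥ k`, and `0` otherwise. -/
noncomputable def nbPmf (k : ℕ) (p : ℝ) : ℕ → ℝ := fun m =>
  if k ≤ m then ((m - 1).choose (k - 1) : ℝ) * p ^ k * (1 - p) ^ (m - k) else 0

lemma nbPmf_shift (k : ℕ) (hk : 0 < k) (p : ℝ) (n : ℕ) :
    nbPmf k p (n + k) = ((n + (k - 1)).choose (k - 1) : ℝ) * p ^ k * (1 - p) ^ n := by
  have h1 : n + k - 1 = n + (k - 1) := by omega
  have h2 : n + k - k = n := by omega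
  simp only [nbPmf, if_pos (Nat.le_add_left k n), h1, h2]

lemma hasSum_of_shift (k : ℕ) {f : ℕ → ℝ} (h0 : ∀ m < k, f m = 0) {S : ℝ}
    (h : HasSum (fun n => f (n + k)) S) : HasSum f S := by
  have := (hasSum_nat_add_iff (f := f) k).1 h
  simpa [Finset.sum_eq_zero fun i hi => h0 i (Finset.mem_range.1 hi)] using this

lemma nat_id1 (n k : ℕ) (hk : 0 < k) :
    (n + k) * (n + (k - 1)).choose (k - 1) = k * (n + k).choose k := by
  obtain ⟨m, rfl⟩ := Nat.exists_eq_succ_of_ne_zero hk.ne'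
  simp only [Nat.succ_sub_one]
  calc (n + (m + 1)) * (n + m).choose m = (n + m).succ * (n + m).choose m := by rw [Nat.succ_eq_add_one]; ring
    _ = (n + m + 1).choose (m + 1) * (m + 1) := Nat.add_one_mul_choose_eq (n + m) m
    _ = (m + 1) * (n + (m + 1)).choose (m + 1) := by ring

lemma nat_id2 (n k : ℕ) (hk : 0 < k) :
    (n + k) * ((n + k + 1) * (n + (k - 1)).choose (k - 1))
      = k * ((k + 1) * (n + (k + 1)).choose (k + 1)) := by
  calc (n + k) * ((n + k + 1) * (n + (k - 1)).choose (k - 1))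
      = (n + k + 1) * ((n + k) * (n + (k - 1)).choose (k - 1)) := by ring
    _ = (n + k + 1) * (k * (n + k).choose k) := by rw [nat_id1 n k hk]
    _ = k * ((n + k).succ * (n + k).choose k) := by rw [Nat.succ_eq_add_one]; ring
    _ = k * ((n + k + 1).choose (k + 1) * (k + 1)) := by rw [Nat.succ_eq_add_one, Nat.add_one_mul_choose_eq]
    _ = k * ((k + 1) * (n + (k + 1)).choose (k + 1)) := by ring

variable {p : ℝ}

lemma norm_q_lt (hp : p ∈ Set.Ioc (0:ℝ) 1) : ‖1 - p‖ < 1 := by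
  rw [Real.norm_eq_abs, abs_lt]; constructor <;> [linarith [hp.2]; linarith [hp.1]]

lemma hasSum_nbPmf (k : ℕ) (hk : 0 < k) (hp : p ∈ Set.Ioc (0:ℝ) 1) :
    HasSum (nbPmf k p) 1 := by
  have hq := norm_q_lt hp
  apply hasSum_of_shift k (fun m hm => by simp [nbPmf, Nat.not_le.2 hm])
  have h := (hasSum_choose_mul_geometric_of_norm_lt_one (k - 1) hq).mul_right (p ^ k)
  have hk1 : k - 1 + 1 = k := by omega
  rw [hk1, sub_sub_cancel] at h
  have hv : 1 / p ^ k * p ^ k = 1 := by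
    have hp0 : p ≠ 0 := ne_of_gt hp.1
    field_simp
  rw [hv] at h
  have hfun : (fun n : ℕ => nbPmf k p (n + k))
      = fun n => ((n + (k - 1)).choose (k - 1) : ℝ) * (1 - p) ^ n * p ^ k := by
    funext n; rw [nbPmf_shift k hk]; ring
  rw [hfun]; exact h

lemma hasSum_mul_nbPmf (k : ℕ) (hk : 0 < k) (hp : p ∈ Set.Ioc (0:ℝ) 1) :
    HasSum (fun m : ℕ => (m : ℝ) * nbPmf k p m) ((k : ℝ) / p) := by
  have hq := norm_q_lt hp
  apply hasSum_of_shift k (fun m hm => by simp [nbPmf, Nat.not_le.2 hm])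
  have h := (hasSum_choose_mul_geometric_of_norm_lt_one k hq).mul_right ((k : ℝ) * p ^ k)
  rw [sub_sub_cancel] at h
  have hv : 1 / p ^ (k + 1) * ((k : ℝ) * p ^ k) = (k : ℝ) / p := by
    have hp0 : p ≠ 0 := ne_of_gt hp.1
    field_simp; ring
  rw [hv] at h
  have hfun : (fun n : ℕ => ((n + k : ℕ) : ℝ) * nbPmf k p (n + k))
      = fun n => ((n + k).choose k : ℝ) * (1 - p) ^ n * ((k : ℝ) * p ^ k) := by
    funext n
    rw [nbPmf_shift k hk]
    have : ((n + k : ℕ) : ℝ) * ((n + (k - 1)).choose (k - 1) : ℝ)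
        = (k : ℝ) * ((n + k).choose k : ℝ) := by exact_mod_cast congrArg Nat.cast (nat_id1 n k hk)
    calc ((n + k : ℕ) : ℝ) * (((n + (k - 1)).choose (k - 1) : ℝ) * p ^ k * (1 - p) ^ n)
        = ((n + k : ℕ) : ℝ) * ((n + (k - 1)).choose (k - 1) : ℝ) * p ^ k * (1 - p) ^ n := by ring
      _ = (k : ℝ) * ((n + k).choose k : ℝ) * p ^ k * (1 - p) ^ n := by rw [this]
      _ = ((n + k).choose k : ℝ) * (1 - p) ^ n * ((k : ℝ) * p ^ k) := by ring
  rw [hfun]; exact h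

lemma hasSum_mul2_nbPmf (k : ℕ) (hk : 0 < k) (hp : p ∈ Set.Ioc (0:ℝ) 1) :
    HasSum (fun m : ℕ => (m : ℝ) * ((m : ℝ) + 1) * nbPmf k p m)
      ((k : ℝ) * ((k : ℝ) + 1) / p ^ 2) := by
  have hq := norm_q_lt hp
  apply hasSum_of_shift k (fun m hm => by simp [nbPmf, Nat.not_le.2 hm])
  have h := (hasSum_choose_mul_geometric_of_norm_lt_one (k + 1) hq).mul_right
    ((k : ℝ) * ((k : ℝ) + 1) * p ^ k)
  rw [sub_sub_cancel] at h
  have hv : 1 / p ^ (k + 1 + 1) * ((k : ℝ) * ((k : ℝ) + 1) * p ^ k)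
      = (k : ℝ) * ((k : ℝ) + 1) / p ^ 2 := by
    have hp0 : p ≠ 0 := ne_of_gt hp.1
    field_simp; ring
  rw [hv] at h
  have hfun : (fun n : ℕ => ((n + k : ℕ) : ℝ) * (((n + k : ℕ) : ℝ) + 1) * nbPmf k p (n + k))
      = fun n => ((n + (k + 1)).choose (k + 1) : ℝ) * (1 - p) ^ n
          * ((k : ℝ) * ((k : ℝ) + 1) * p ^ k) := by
    funext n
    rw [nbPmf_shift k hk]
    have hcast : ((n + k : ℕ) : ℝ) * ((((n + k + 1 : ℕ)) : ℝ) * ((n + (k - 1)).choose (k - 1) : ℝ))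
        = (k : ℝ) * (((k : ℝ) + 1) * ((n + (k + 1)).choose (k + 1) : ℝ)) := by
      exact_mod_cast congrArg Nat.cast (nat_id2 n k hk)
    have hc1 : (((n + k : ℕ)) : ℝ) + 1 = ((n + k + 1 : ℕ) : ℝ) := by push_cast; ring
    calc ((n + k : ℕ) : ℝ) * (((n + k : ℕ) : ℝ) + 1)
          * (((n + (k - 1)).choose (k - 1) : ℝ) * p ^ k * (1 - p) ^ n)
        = ((n + k : ℕ) : ℝ) * (((n + k + 1 : ℕ) : ℝ)
            * ((n + (k - 1)).choose (k - 1) : ℝ)) * p ^ k * (1 - p) ^ n := by rw [← hc1]; ring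
      _ = (k : ℝ) * (((k : ℝ) + 1) * ((n + (k + 1)).choose (k + 1) : ℝ)) * p ^ k * (1 - p) ^ n := by
            rw [hcast]
      _ = ((n + (k + 1)).choose (k + 1) : ℝ) * (1 - p) ^ n
            * ((k : ℝ) * ((k : ℝ) + 1) * p ^ k) := by ring
  rw [hfun]; exact h


lemma integral_comp_nat {Ω' : Type*} [MeasurableSpace Ω'] (μ : Measure Ω')
    [IsProbabilityMeasure μ] (x : Ω' → ℕ) (hx : Measurable x) (g : ℕ → ℝ)
    (hg : ∀ m, 0 ≤ g m) {S : ℝ}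
    (hS : HasSum (fun m => g m * (μ (x ⁻¹' {m})).toReal) S) :
    Integrable (fun ω => g (x ω)) μ ∧ ∫ ω, g (x ω) ∂μ = S := by
  have hgm : Measurable g := measurable_from_top
  have hterm : ∀ m : ℕ, 0 ≤ g m * (μ (x ⁻¹' {m})).toReal :=
    fun m => mul_nonneg (hg m) ENNReal.toReal_nonneg
  have key : ∫⁻ ω, ENNReal.ofReal (g (x ω)) ∂μ = ENNReal.ofReal S := by
    calc ∫⁻ ω, ENNReal.ofReal (g (x ω)) ∂μ
        = ∫⁻ m, ENNReal.ofReal (g m) ∂(μ.map x) :=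
          (lintegral_map (f := fun m => ENNReal.ofReal (g m)) measurable_from_top hx).symm
      _ = ∑' m, ENNReal.ofReal (g m) * (μ.map x) {m} := lintegral_countable' _
      _ = ∑' m, ENNReal.ofReal (g m * (μ (x ⁻¹' {m})).toReal) := by
          refine tsum_congr fun m => ?_
          rw [Measure.map_apply hx (measurableSet_singleton m),
            ENNReal.ofReal_mul (hg m), ENNReal.ofReal_toReal (measure_ne_top μ _)]
      _ = ENNReal.ofReal S := by
          rw [← hS.tsum_eq, ENNReal.ofReal_tsum_of_nonneg hterm hS.summable]
  have hmeas : AEStronglyMeasurable (fun ω => g (x ω)) μ :=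
    (hgm.comp hx).aestronglyMeasurable
  have hint : Integrable (fun ω => g (x ω)) μ := by
    refine ⟨hmeas, ?_⟩
    rw [hasFiniteIntegral_iff_ofReal (ae_of_all _ fun ω => hg (x ω)), key]
    exact ENNReal.ofReal_lt_top
  refine ⟨hint, ?_⟩
  rw [integral_eq_lintegral_of_nonneg_ae (ae_of_all _ fun ω => hg (x ω)) hmeas, key,
    ENNReal.toReal_ofReal (hS.nonneg hterm)]

lemma integral_prod_of_indep {ι : Type*} {Ω' : Type*} [MeasurableSpace Ω'] (μ : Measure Ω')
    [IsProbabilityMeasure μ] (Y : ι → Ω' → ℝ) (hYm : ∀ j, Measurable (Y j))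
    (hindep : iIndepFun Y μ)
    (hint : ∀ j, Integrable (Y j) μ) (s : Finset ι) :
    Integrable (fun ω => ∏ j ∈ s, Y j ω) μ ∧
      ∫ ω, ∏ j ∈ s, Y j ω ∂μ = ∏ j ∈ s, ∫ ω, Y j ω ∂μ := by
  classical
  induction s using Finset.induction_on with
  | empty => simp
  | insert i s hi ih =>
    have hIF : IndepFun (Y i) (∏ j ∈ s, Y j) μ :=
      (hindep.indepFun_finsetProd_of_notMem hYm hi).symm
    have hprodeq : (∏ j ∈ s, Y j) = fun ω => ∏ j ∈ s, Y j ω := by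
      funext ω; exact Finset.prod_apply ω s Y
    have hint1 : Integrable (∏ j ∈ s, Y j) μ := by rw [hprodeq]; exact ih.1
    have hmul : Integrable (Y i * ∏ j ∈ s, Y j) μ := hIF.integrable_mul (hint i) hint1
    have heq : (fun ω => ∏ j ∈ insert i s, Y j ω) = Y i * ∏ j ∈ s, Y j := by
      funext ω
      rw [Finset.prod_insert hi, hprodeq]
      rfl
    constructor
    · rw [heq]; exact hmul
    · rw [heq, hIF.integral_mul_eq_mul_integral (hint i).1 hint1.1, Finset.prod_insert hi, hprodeq,
        ih.2]


noncomputable def Mval (k : ℕ) (p : ℝ) : ℝ :=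
  ((k : ℝ) * ((k : ℝ) + 1) / p ^ 2 - (k : ℝ) / p) / (k : ℝ) ^ 2

set_option maxHeartbeats 2000000 in
/-- Let `ε ∈ (0,1/2)`, let `k ≥ 4n/ε²` be a positive integer,
and let `xⱼ ∼ NB(k, pⱼ)` be independent with `pⱼ ∈ (0,1]`. With
`W = ∏ⱼ (xⱼ/k)` and `μ* = ∏ⱼ 1/pⱼ`, we have `Pr[|W − μ*| ≥ ε·μ*] ≤ 1/3`;
in particular `W ∈ [(1−ε)μ*, (1+ε)μ*]` with probability at least `2/3`. -/
theorem nb_product_concentration (n : ℕ) (hn : 0 < n)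
    (ε : ℝ) (hε : ε ∈ Set.Ioo (0 : ℝ) (1/2))
    (k : ℕ) (hk : 0 < k) (hkge : (4 : ℝ) * n / ε ^ 2 ≤ k)
    (p : Fin n → ℝ) (hp : ∀ j, p j ∈ Set.Ioc (0 : ℝ) 1)
    {Ω : Type*} [MeasurableSpace Ω] (μ : Measure Ω) [IsProbabilityMeasure μ]
    (x : Fin n → Ω → ℕ) (hmeas : ∀ j, Measurable (x j))
    (hindep : iIndepFun x μ)
    (hdist : ∀ j, ∀ m : ℕ, (μ (x j ⁻¹' {m})).toReal = nbPmf k (p j) m) :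
    (μ {ω | ε * (∏ j, 1 / p j) ≤ |(∏ j, (x j ω : ℝ) / k) - ∏ j, 1 / p j|}).toReal
        ≤ 1 / 3
    ∧ 2 / 3 ≤ (μ {ω | (∏ j, (x j ω : ℝ) / k)
          ∈ Set.Icc ((1 - ε) * ∏ j, 1 / p j) ((1 + ε) * ∏ j, 1 / p j)}).toReal := by
  obtain ⟨hε0, hε2⟩ := hε
  have hk0 : (0:ℝ) < k := Nat.cast_pos.2 hk
  have hkne : (k:ℝ) ≠ 0 := hk0.ne'
  set P : ℝ := ∏ j, 1 / p j with hPdef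
  set W : Ω → ℝ := fun ω => ∏ j, (x j ω : ℝ) / k with hWdef
  have hPpos : 0 < P := Finset.prod_pos fun j _ => by
    have := (hp j).1; positivity
  -- per-coordinate first moments
  have hS1 : ∀ j, HasSum (fun m : ℕ => ((m:ℝ)/k) * (μ (x j ⁻¹' {m})).toReal) (1 / p j) := by
    intro j
    have hpne : p j ≠ 0 := ne_of_gt (hp j).1
    have h := (hasSum_mul_nbPmf k hk (hp j)).div_const k
    have hval : (k:ℝ) / p j / k = 1 / p j := by
      field_simp
    rw [hval] at h
    have hfun : (fun m : ℕ => ((m:ℝ)/k) * (μ (x j ⁻¹' {m})).toReal)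
        = fun m : ℕ => ((m:ℝ) * nbPmf k (p j) m) / k := by
      funext m; rw [hdist j m]; ring
    rw [hfun]; exact h
  -- per-coordinate second moments
  have hS2 : ∀ j, HasSum (fun m : ℕ => ((m:ℝ)/k)^2 * (μ (x j ⁻¹' {m})).toReal)
      (Mval k (p j)) := by
    intro j
    have h := ((hasSum_mul2_nbPmf k hk (hp j)).sub (hasSum_mul_nbPmf k hk (hp j))).div_const
      ((k:ℝ)^2)
    have hfun : (fun m : ℕ => ((m:ℝ)/k)^2 * (μ (x j ⁻¹' {m})).toReal)
        = fun m : ℕ => ((m:ℝ) * ((m:ℝ)+1) * nbPmf k (p j) m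
            - (m:ℝ) * nbPmf k (p j) m) / (k:ℝ)^2 := by
      funext m; rw [hdist j m]; ring
    rw [hfun]; simp only [Mval]; exact h
  have h1 : ∀ j, Integrable (fun ω => ((x j ω : ℝ)/k)) μ
      ∧ ∫ ω, ((x j ω : ℝ)/k) ∂μ = 1 / p j := fun j =>
    integral_comp_nat μ (x j) (hmeas j) (fun m => (m:ℝ)/k)
      (fun m => by positivity) (hS1 j)
  have h2 : ∀ j, Integrable (fun ω => ((x j ω : ℝ)/k)^2) μ
      ∧ ∫ ω, ((x j ω : ℝ)/k)^2 ∂μ = Mval k (p j) := fun j =>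
    integral_comp_nat μ (x j) (hmeas j) (fun m => ((m:ℝ)/k)^2)
      (fun m => by positivity) (hS2 j)
  have hind1 : iIndepFun (fun j ω => ((x j ω : ℝ)/k)) μ :=
    hindep.comp (fun _ (m:ℕ) => (m:ℝ)/k) (fun _ => measurable_from_nat)
  have hind2 : iIndepFun (fun j ω => ((x j ω : ℝ)/k)^2) μ :=
    hindep.comp (fun _ (m:ℕ) => ((m:ℝ)/k)^2) (fun _ => measurable_from_nat)
  have hm1 : ∀ j, Measurable (fun ω => ((x j ω : ℝ)/k)) :=
    fun j => Measurable.comp (measurable_from_nat (f := fun m : ℕ => (m:ℝ)/(k:ℝ))) (hmeas j)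
  have hm2 : ∀ j, Measurable (fun ω => ((x j ω : ℝ)/k)^2) :=
    fun j => Measurable.comp (measurable_from_nat (f := fun m : ℕ => ((m:ℝ)/(k:ℝ))^2)) (hmeas j)
  have hprod1 := integral_prod_of_indep μ _ hm1 hind1 (fun j => (h1 j).1) Finset.univ
  have hprod2 := integral_prod_of_indep μ _ hm2 hind2 (fun j => (h2 j).1) Finset.univ
  have hWmeas : Measurable W := Finset.measurable_prod _ fun j _ => hm1 j
  have hEW : μ[W] = P := by
    rw [hPdef, hWdef]
    rw [hprod1.2]
    exact Finset.prod_congr rfl fun j _ => (h1 j).2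
  have hWsqeq : (fun ω => W ω ^ 2) = fun ω => ∏ j, ((x j ω : ℝ)/k)^2 := by
    funext ω; rw [hWdef]; exact (Finset.prod_pow _ _ _).symm
  have hWsqInt : Integrable (fun ω => W ω ^ 2) μ := by rw [hWsqeq]; exact hprod2.1
  have hmem : MemLp W 2 μ :=
    (memLp_two_iff_integrable_sq hWmeas.aestronglyMeasurable).2 hWsqInt
  have hvar : variance W μ = (∏ j, Mval k (p j)) - P^2 := by
    rw [variance_eq_sub hmem]
    have e2 : μ[W^2] = ∏ j, Mval k (p j) := by
      have : (W^2) = fun ω => ∏ j, ((x j ω : ℝ)/k)^2 := by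
        funext ω; simp only [Pi.pow_apply]
        rw [hWdef]; exact (Finset.prod_pow _ _ _).symm
      rw [this, hprod2.2]
      exact Finset.prod_congr rfl fun j _ => (h2 j).2
    rw [e2, hEW]
  have hc : 0 < ε * P := mul_pos hε0 hPpos
  have hcheb := meas_ge_le_variance_div_sq (μ := μ) hmem hc
  rw [hEW] at hcheb
  -- numeric bounds
  have hε2pos : (0:ℝ) < ε^2 := by positivity
  have hnk : (n:ℝ)/k ≤ ε^2/4 := by
    rw [div_le_iff₀ hε2pos] at hkge
    rw [div_le_div_iff₀ hk0 (by norm_num : (0:ℝ) < 4)]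
    nlinarith
  have hεlt : ε^2 < 1/4 := by nlinarith
  have hnk0 : (0:ℝ) ≤ (n:ℝ)/k := by positivity
  have h1mt : (15:ℝ)/16 ≤ 1 - (n:ℝ)/k := by nlinarith
  have hk1 : 1/(k:ℝ) ≤ 1 := by rw [div_le_one hk0]; exact_mod_cast hk
  have hk1' : (0:ℝ) < 1/(k:ℝ) := by positivity
  have hbern : (1:ℝ) - (n:ℝ)/k ≤ (1 - 1/(k:ℝ))^n := by
    have h := one_add_mul_le_pow (show (-2:ℝ) ≤ -(1/(k:ℝ)) by linarith) n
    have he : (1:ℝ) + -(1/(k:ℝ)) = 1 - 1/(k:ℝ) := by ring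
    have he2 : (1:ℝ) + (n:ℝ) * -(1/(k:ℝ)) = 1 - (n:ℝ)/k := by ring
    rw [he, he2] at h
    exact h
  have hgeom : (1 + 1/(k:ℝ))^n ≤ 1/(1 - (n:ℝ)/k) := by
    have hpos1 : (0:ℝ) < 1 - (n:ℝ)/k := by linarith
    rw [le_div_iff₀ hpos1]
    calc (1+1/(k:ℝ))^n * (1 - (n:ℝ)/k)
        ≤ (1+1/(k:ℝ))^n * (1-1/(k:ℝ))^n :=
          mul_le_mul_of_nonneg_left hbern (by positivity)
      _ = ((1+1/(k:ℝ))*(1-1/(k:ℝ)))^n := (mul_pow _ _ _).symm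
      _ = (1 - (1/(k:ℝ))^2)^n := by ring_nf
      _ ≤ 1 := pow_le_one₀ (by nlinarith) (by nlinarith)
  have hMnonneg : ∀ j, 0 ≤ Mval k (p j) := fun j =>
    (hS2 j).nonneg fun m => mul_nonneg (by positivity) ENNReal.toReal_nonneg
  have hMle : ∀ j, Mval k (p j) ≤ (1/p j)^2 * (1 + 1/(k:ℝ)) := by
    intro j
    have hpj : 0 < p j := (hp j).1
    have hkey : (1/p j)^2 * (1 + 1/(k:ℝ)) - Mval k (p j) = 1/((k:ℝ) * p j) := by
      simp only [Mval]; field_simp; ring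
    have : (0:ℝ) < 1/((k:ℝ) * p j) := by positivity
    linarith
  have hprodM : ∏ j, Mval k (p j) ≤ P^2 * (1+1/(k:ℝ))^n := by
    calc ∏ j, Mval k (p j) ≤ ∏ j, ((1/p j)^2 * (1 + 1/(k:ℝ))) :=
          Finset.prod_le_prod (fun j _ => hMnonneg j) (fun j _ => hMle j)
      _ = (∏ j, (1/p j)^2) * (1+1/(k:ℝ))^n := by
          rw [Finset.prod_mul_distrib, Finset.prod_const, Finset.card_univ, Fintype.card_fin]
      _ = P^2 * (1+1/(k:ℝ))^n := by rw [hPdef, ← Finset.prod_pow]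
  have hvarle : variance W μ ≤ P^2 * (ε^2/3) := by
    have hpos1 : (0:ℝ) < 1 - (n:ℝ)/k := by linarith
    have hG1 : (1+1/(k:ℝ))^n - 1 ≤ ((n:ℝ)/k) / (1 - (n:ℝ)/k) := by
      have hknpos : (0:ℝ) < (k:ℝ) - n := by
        have h' : (n:ℝ) < k := (div_lt_one hk0).mp (by linarith)
        linarith
      have hr : 1/(1 - (n:ℝ)/k) - 1 = ((n:ℝ)/k) / (1 - (n:ℝ)/k) := by
        field_simp
        ring
      linarith [hgeom]
    have hG2 : ((n:ℝ)/k) / (1 - (n:ℝ)/k) ≤ ε^2/3 := by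
      have hd := div_le_div₀ (show (0:ℝ) ≤ ε^2/4 by positivity) hnk
        (by norm_num : (0:ℝ) < 15/16) h1mt
      have h2 : (ε^2/4)/((15:ℝ)/16) = ε^2 * (4/15) := by ring
      nlinarith
    rw [hvar]
    have hGle : (1+1/(k:ℝ))^n - 1 ≤ ε^2/3 := le_trans hG1 hG2
    nlinarith [sq_nonneg P, hprodM, mul_le_mul_of_nonneg_left hGle (sq_nonneg P)]
  have hbound : variance W μ / (ε*P)^2 ≤ 1/3 := by
    rw [div_le_iff₀ (by positivity)]
    calc variance W μ ≤ P^2*(ε^2/3) := hvarle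
      _ = 1/3 * (ε*P)^2 := by ring
  have hA : (μ {ω | ε*P ≤ |W ω - P|}).toReal ≤ 1/3 := by
    calc (μ {ω | ε*P ≤ |W ω - P|}).toReal
        ≤ (ENNReal.ofReal (variance W μ / (ε*P)^2)).toReal :=
          ENNReal.toReal_mono ENNReal.ofReal_ne_top hcheb
      _ = variance W μ / (ε*P)^2 :=
          ENNReal.toReal_ofReal (div_nonneg (variance_nonneg _ _) (by positivity))
      _ ≤ 1/3 := hbound
  have hsetA : {ω | ε * P ≤ |(∏ j, (x j ω : ℝ) / k) - P|} = {ω | ε*P ≤ |W ω - P|} := rfl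
  have hAm : MeasurableSet {ω | ε*P ≤ |W ω - P|} :=
    measurableSet_le measurable_const ((hWmeas.sub measurable_const).abs)
  constructor
  · rw [hsetA]; exact hA
  · have hsub : {ω | ε*P ≤ |W ω - P|}ᶜ
        ⊆ {ω | (∏ j, (x j ω : ℝ) / k) ∈ Set.Icc ((1 - ε) * P) ((1 + ε) * P)} := by
      intro ω hω
      simp only [Set.mem_compl_iff, Set.mem_setOf_eq, not_le] at hω
      have h1 := abs_lt.1 hω
      have hWω : W ω = ∏ j, (x j ω : ℝ) / k := rfl
      simp only [Set.mem_setOf_eq, Set.mem_Icc, ← hWω]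
      constructor
      · nlinarith [h1.1]
      · nlinarith [h1.2]
    have hcompl : (2:ℝ)/3 ≤ (μ ({ω | ε*P ≤ |W ω - P|}ᶜ)).toReal := by
      rw [measure_compl hAm (measure_ne_top μ _), measure_univ,
        ENNReal.toReal_sub_of_le prob_le_one ENNReal.one_ne_top, ENNReal.toReal_one]
      linarith
    calc (2:ℝ)/3 ≤ (μ ({ω | ε*P ≤ |W ω - P|}ᶜ)).toReal := hcompl
      _ ≤ (μ {ω | (∏ j, (x j ω : ℝ) / k)
            ∈ Set.Icc ((1 - ε) * P) ((1 + ε) * P)}).toReal :=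
          ENNReal.toReal_mono (measure_ne_top μ _) (measure_mono hsub)
end

section
/- Let n be a positive integer, θ ∈ (0,1), and let Σ be a finite nonempty alphabet. Let D be a probability mass function on Σ^n with full support (D(σ) > 0 for all σ), and let D' be a probability mass function on Σ^n such that for every ℓ ∈ {1, …, n}, every prefix ρ ∈ Σ^{ℓ−1}, and every c ∈ Σ: D'^ℓ_ρ(c) = (1 − θ)·D^ℓ_ρ(c) + θ/|Σ|. Then d_TV(D, D') ≤ θ·n. -/
open Finset

/-- The probability mass `D(S_{σ_{<j}})` of the set of strings agreeing with `σ`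
on the first `j` coordinates. -/
noncomputable def prefMass {n : ℕ} {A : Type*} [Fintype A] [DecidableEq A]
    (D : (Fin n → A) → ℝ) (σ : Fin n → A) (j : ℕ) : ℝ :=
  ∑ w : Fin n → A, if ∀ i : Fin n, (i : ℕ) < j → w i = σ i then D w else 0

/-- The conditional marginal `D^{j+1}_{σ_{<j+1}}(σ[j+1])` (0-indexed `j`).
Quantifying over all `σ` and all `j` captures all pairs of a prefix
`ρ ∈ Σ^{ℓ-1}` and a symbol `c`. -/
noncomputable def condMarg {n : ℕ} {A : Type*} [Fintype A] [DecidableEq A]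
    (D : (Fin n → A) → ℝ) (σ : Fin n → A) (j : Fin n) : ℝ :=
  prefMass D σ (j + 1) / prefMass D σ j

section Aux

variable {n : ℕ} {A : Type*} [Fintype A] [DecidableEq A]

lemma prefMass_nonneg (D : (Fin n → A) → ℝ) (hD : ∀ σ, 0 ≤ D σ) (σ : Fin n → A) (j : ℕ) :
    0 ≤ prefMass D σ j := by
  apply Finset.sum_nonneg
  intro w _
  split_ifs
  · exact hD w
  · exact le_refl 0

lemma prefMass_pos (D : (Fin n → A) → ℝ) (hD : ∀ σ, 0 < D σ) (σ : Fin n → A) (j : ℕ) :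
    0 < prefMass D σ j := by
  have h1 : D σ ≤ prefMass D σ j := by
    have := Finset.single_le_sum
      (f := fun w : Fin n → A => if ∀ i : Fin n, (i : ℕ) < j → w i = σ i then D w else 0)
      (fun w _ => by split_ifs with h; exacts [(hD w).le, le_refl 0])
      (Finset.mem_univ σ)
    simpa [prefMass] using this
  exact lt_of_lt_of_le (hD σ) h1

lemma prefMass_zero (D : (Fin n → A) → ℝ) (hD1 : ∑ σ, D σ = 1) (σ : Fin n → A) :
    prefMass D σ 0 = 1 := by
  unfold prefMass
  simp only [Nat.not_lt_zero, false_implies, implies_true, if_true]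
  exact hD1

lemma prefMass_top (D : (Fin n → A) → ℝ) (σ : Fin n → A) :
    prefMass D σ n = D σ := by
  unfold prefMass
  rw [Finset.sum_eq_single σ]
  · simp
  · intro w _ hw
    rw [if_neg]
    intro h
    exact hw (funext fun i => h i i.isLt)
  · simp

lemma prefMass_succ (D : (Fin n → A) → ℝ) (σ : Fin n → A) (j : Fin n)
    (h : prefMass D σ j ≠ 0) :
    prefMass D σ ((j : ℕ) + 1) = condMarg D σ j * prefMass D σ j := by
  unfold condMarg
  field_simp

end Aux

/-- If `D` is a fully supported pmf on `Σⁿ`, `θ ∈ (0,1)`,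
and `D'` is a pmf whose conditional marginals satisfy
`D'^ℓ_ρ(c) = (1-θ)·D^ℓ_ρ(c) + θ/|Σ|` for every prefix `ρ` and symbol `c`,
then `d_TV(D, D') ≤ θ·n`. -/
theorem tv_tamed_le_hypergrid {n : ℕ} (hn : 0 < n) (θ : ℝ) (hθ : θ ∈ Set.Ioo (0 : ℝ) 1)
    {A : Type*} [Fintype A] [DecidableEq A] [Nonempty A]
    (D D' : (Fin n → A) → ℝ)
    (hD0 : ∀ σ, 0 < D σ) (hD1 : ∑ σ, D σ = 1)
    (hD'0 : ∀ σ, 0 ≤ D' σ) (hD'1 : ∑ σ, D' σ = 1)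
    (htame : ∀ (σ : Fin n → A) (j : Fin n),
      condMarg D' σ j = (1 - θ) * condMarg D σ j + θ / (Fintype.card A : ℝ)) :
    (1 / 2) * ∑ σ, |D σ - D' σ| ≤ θ * n := by
  obtain ⟨hθ0, hθ1⟩ := hθ
  have hcard : (0 : ℝ) < (Fintype.card A : ℝ) := by
    exact_mod_cast Fintype.card_pos
  have h1θ : (0 : ℝ) ≤ 1 - θ := by linarith
  -- key: D' σ ≥ (1-θ)^n * D σ
  have key : ∀ (σ : Fin n → A) (j : ℕ), j ≤ n →
      0 < prefMass D' σ j ∧ (1 - θ) ^ j * prefMass D σ j ≤ prefMass D' σ j := by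
    intro σ j
    induction j with
    | zero =>
      intro _
      rw [prefMass_zero D' hD'1, prefMass_zero D hD1]
      norm_num
    | succ j ih =>
      intro hjn
      have hj : j < n := Nat.lt_of_succ_le hjn
      obtain ⟨hpos, hle⟩ := ih (le_of_lt hj)
      set jf : Fin n := ⟨j, hj⟩ with hjf
      have hcoe : (jf : ℕ) = j := rfl
      have hcm_nonneg : 0 ≤ condMarg D σ jf := by
        unfold condMarg
        exact div_nonneg (prefMass_nonneg D (fun w => (hD0 w).le) σ _)
          (prefMass_nonneg D (fun w => (hD0 w).le) σ _)
      have hcm' : condMarg D' σ jf = (1 - θ) * condMarg D σ jf + θ / (Fintype.card A : ℝ) :=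
        htame σ jf
      have hcm'_pos : 0 < condMarg D' σ jf := by
        rw [hcm']
        have : 0 < θ / (Fintype.card A : ℝ) := div_pos hθ0 hcard
        nlinarith [mul_nonneg h1θ hcm_nonneg]
      have hrecD' : prefMass D' σ (j + 1) = condMarg D' σ jf * prefMass D' σ j := by
        have := prefMass_succ D' σ jf (ne_of_gt hpos)
        rwa [hcoe] at this
      have hrecD : prefMass D σ (j + 1) = condMarg D σ jf * prefMass D σ j := by
        have := prefMass_succ D σ jf (ne_of_gt (prefMass_pos D hD0 σ j))
        rwa [hcoe] at this
      constructor
      · rw [hrecD']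
        exact mul_pos hcm'_pos hpos
      · rw [hrecD', hrecD]
        have step1 : (1 - θ) ^ (j + 1) * (condMarg D σ jf * prefMass D σ j)
            = ((1 - θ) * condMarg D σ jf) * ((1 - θ) ^ j * prefMass D σ j) := by
          ring
        rw [step1]
        have h2 : ((1 - θ) * condMarg D σ jf) * ((1 - θ) ^ j * prefMass D σ j)
            ≤ ((1 - θ) * condMarg D σ jf) * prefMass D' σ j :=
          mul_le_mul_of_nonneg_left hle (mul_nonneg h1θ hcm_nonneg)
        have h3 : ((1 - θ) * condMarg D σ jf) * prefMass D' σ j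
            ≤ condMarg D' σ jf * prefMass D' σ j := by
          apply mul_le_mul_of_nonneg_right _ hpos.le
          rw [hcm']
          have : 0 ≤ θ / (Fintype.card A : ℝ) := (div_pos hθ0 hcard).le
          linarith
        linarith
  have keyn : ∀ σ : Fin n → A, (1 - θ) ^ n * D σ ≤ D' σ := by
    intro σ
    have := (key σ n le_rfl).2
    rwa [prefMass_top D, prefMass_top D'] at this
  -- half sum of abs = sum of positive parts
  have habs : ∀ x : ℝ, |x| = 2 * max x 0 - x := by
    intro x
    rcases le_or_gt x 0 with h | h
    · rw [abs_of_nonpos h, max_eq_right h]; ring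
    · rw [abs_of_pos h, max_eq_left h.le]; ring
  have hsum : (1 / 2) * ∑ σ, |D σ - D' σ| = ∑ σ, max (D σ - D' σ) 0 := by
    have e1 : ∑ σ, |D σ - D' σ| = ∑ σ, (2 * max (D σ - D' σ) 0 - (D σ - D' σ)) :=
      Finset.sum_congr rfl fun σ _ => habs _
    rw [e1, Finset.sum_sub_distrib, Finset.sum_sub_distrib, hD1, hD'1, ← Finset.mul_sum]
    ring
  rw [hsum]
  have hpow_le_one : (1 - θ) ^ n ≤ 1 := pow_le_one₀ h1θ (by linarith)
  have hbern : 1 - θ * n ≤ (1 - θ) ^ n := by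
    have := one_add_mul_le_pow (a := -θ) (by linarith) n
    have h2 : (1 + (n : ℝ) * -θ) = 1 - θ * n := by ring
    have h3 : (1 + -θ) = 1 - θ := by ring
    rw [h2, h3] at this
    exact this
  have hbound : ∑ σ, max (D σ - D' σ) 0 ≤ ∑ σ, (1 - (1 - θ) ^ n) * D σ := by
    apply Finset.sum_le_sum
    intro σ _
    apply max_le
    · have := keyn σ
      nlinarith
    · exact mul_nonneg (by linarith) (hD0 σ).le
  calc ∑ σ, max (D σ - D' σ) 0 ≤ ∑ σ, (1 - (1 - θ) ^ n) * D σ := hbound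
    _ = (1 - (1 - θ) ^ n) := by rw [← Finset.mul_sum, hD1, mul_one]
    _ ≤ θ * n := by linarith
end
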